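/- Let G be a simple graph with no C_4 or C_8, let C = x_1...x_5 x_1 be a 5-cycle, and suppose x_i ∈ I_C, i.e., x_i and x_{i+1} have a common neighbor outside C. Let P = u_1...u_s and Q = v_1...v_t be paths in G − V(C) with u_1 ∈ A_i ∩ A_{i+1} and v_1 ∈ A_{i+2} ∪ A_{i+4}. If s + t ≤ 7 then P and Q are vertex-disjoint, and if s + t ≤ 6 then there is no edge of G between V(P) and V(Q). -/

import Mathlib

open SimpleGraph

/-- `G` contains a cycle of length `n` as a subgraph. -/
def HasCycleLength {V : Type*} (G : SimpleGraph V) (n : ℕ) : Prop :=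
  ∃ (v : V) (c : G.Walk v v), c.IsCycle ∧ c.length = n

section
variable {V : Type*} {G : SimpleGraph V}

def walkFrom (a b : V) : (l : List V) → (h : List.Chain G.Adj a (l ++ [b])) → G.Walk a b
  | [], h => Walk.cons (by cases h; assumption) Walk.nil
  | c :: l, h =>
      Walk.cons (u := a) (v := c) (by cases h; assumption)
        (walkFrom c b l (by cases h with | cons_cons _ h' => exact h'))

lemma walkFrom_length (a b : V) : ∀ (l : List V) (h : List.Chain G.Adj a (l ++ [b])),
    (walkFrom a b l h).length = l.length + 1
  | [], h => rfl
  | c :: l, h => by simp [walkFrom, walkFrom_length c b l]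

lemma walkFrom_support (a b : V) : ∀ (l : List V) (h : List.Chain G.Adj a (l ++ [b])),
    (walkFrom a b l h).support = a :: (l ++ [b])
  | [], h => rfl
  | c :: l, h => by simp [walkFrom, walkFrom_support c b l]

lemma walkFrom_edge_end (a b c : V) : ∀ (l : List V) (h : List.Chain G.Adj a (l ++ [b])),
    s(c, b) ∈ (walkFrom a b l h).edges → b ∉ a :: l → c = (a :: l).getLast (by simp)
  | [], h, hmem, hb => by
      simp only [walkFrom, Walk.edges_cons, Walk.edges_nil, List.mem_singleton, Sym2.eq_iff] at hmem
      simp at hb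
      rcases hmem with ⟨h1, h2⟩ | ⟨h1, h2⟩
      · exact h1
      · exact absurd h2 hb
  | d :: l, h, hmem, hb => by
      simp only [walkFrom, Walk.edges_cons, List.mem_cons] at hmem
      rcases hmem with h1 | h1
      · rw [Sym2.eq_iff] at h1
        simp at hb
        rcases h1 with ⟨h1, h2⟩ | ⟨h1, h2⟩
        · exact absurd h2 hb.2.1
        · exact absurd h2 hb.1
      · have := walkFrom_edge_end d b c l _ h1 (by simp at hb ⊢; tauto)
        rw [this]
        simp [List.getLast_cons]

lemma hasCycleLength_of_list (a c : V) (l : List V) (hac : G.Adj a c)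
    (hchain : List.Chain G.Adj c (l ++ [a])) (hnd : (a :: c :: l).Nodup) (hne : l ≠ []) :
    ∃ (w : G.Walk a a), w.IsCycle ∧ w.length = l.length + 2 := by
  refine ⟨Walk.cons hac (walkFrom c a l hchain), ?_, by simp [walkFrom_length]⟩
  rw [Walk.cons_isCycle_iff]
  constructor
  · rw [Walk.isPath_def, walkFrom_support]
    simp [List.nodup_append] at hnd ⊢
    aesop
  · intro hmem
    have hmem' : s(c, a) ∈ (walkFrom c a l hchain).edges := Sym2.eq_swap ▸ hmem
    have hend := walkFrom_edge_end c a c l hchain hmem' (by simp at hnd ⊢; tauto)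
    rw [List.getLast_cons hne] at hend
    have hcl : c ∈ l := hend ▸ List.getLast_mem hne
    simp at hnd
    tauto

lemma key (hC4 : ¬ HasCycleLength G 4) (hC8 : ¬ HasCycleLength G 8)
    (x : ZMod 5 → V) (hinj : Function.Injective x)
    (hadj : ∀ i : ZMod 5, G.Adj (x i) (x (i + 1))) (i : ZMod 5)
    (L : ℕ) (hL : L ≤ 5) (p : Fin (L + 1) → V)
    (hpinj : Function.Injective p) (hpout : ∀ a, p a ∉ Set.range x)
    (hppath : ∀ a b : Fin (L + 1), a.val + 1 = b.val → G.Adj (p a) (p b))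
    (h0 : G.Adj (x i) (p ⟨0, Nat.succ_pos L⟩))
    (h0' : G.Adj (x (i + 1)) (p ⟨0, Nat.succ_pos L⟩))
    (hlast : G.Adj (x (i + 2)) (p ⟨L, Nat.lt_succ_self L⟩)) : False := by
  have hxx : ∀ a b : ZMod 5, a + 1 = b → G.Adj (x (i + a)) (x (i + b)) := by
    intro a b hab
    rw [← hab, ← add_assoc]
    exact hadj (i + a)
  interval_cases L
  · exact hC4 ⟨_, (hasCycleLength_of_list (x (i + 0)) (p ⟨0, by omega⟩)
      [x (i + 2), x (i + 1)]
      (by first | simpa using h0 | simpa using h0')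
      (by simp only [List.Chain, List.cons_append, List.nil_append, List.chain_cons]
          repeat' apply And.intro
          all_goals first
            | exact List.Chain.nil
            | exact hppath _ _ (by norm_num)
            | exact hxx _ _ (by decide)
            | exact (hxx _ _ (by decide)).symm
            | exact hlast.symm
            | exact h0
            | exact h0')
      (by simp only [List.nodup_cons, List.mem_cons, List.mem_singleton, List.not_mem_nil,
            List.nodup_nil, not_or, and_true, not_false_iff]
          repeat' apply And.intro
          all_goals first
            | (intro h; have h2 := add_left_cancel (hinj h); revert h2; decide)
            | (intro h; exact hpout _ ⟨_, h.symm⟩)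
            | (intro h; exact hpout _ ⟨_, h⟩)
            | (intro h; have h2 := hpinj h; revert h2; decide))
      (by simp)).imp (fun w hw => ⟨hw.1, by simpa using hw.2⟩)⟩
  · exact hC4 ⟨_, (hasCycleLength_of_list (x (i + 1)) (p ⟨0, by omega⟩)
      [p ⟨1, by omega⟩, x (i + 2)]
      (by first | simpa using h0 | simpa using h0')
      (by simp only [List.Chain, List.cons_append, List.nil_append, List.chain_cons]
          repeat' apply And.intro
          all_goals first
            | exact List.Chain.nil
            | exact hppath _ _ (by norm_num)
            | exact hxx _ _ (by decide)
            | exact (hxx _ _ (by decide)).symm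
            | exact hlast.symm
            | exact h0
            | exact h0')
      (by simp only [List.nodup_cons, List.mem_cons, List.mem_singleton, List.not_mem_nil,
            List.nodup_nil, not_or, and_true, not_false_iff]
          repeat' apply And.intro
          all_goals first
            | (intro h; have h2 := add_left_cancel (hinj h); revert h2; decide)
            | (intro h; exact hpout _ ⟨_, h.symm⟩)
            | (intro h; exact hpout _ ⟨_, h⟩)
            | (intro h; have h2 := hpinj h; revert h2; decide))
      (by simp)).imp (fun w hw => ⟨hw.1, by simpa using hw.2⟩)⟩
  · exact hC8 ⟨_, (hasCycleLength_of_list (x (i + 1)) (p ⟨0, by omega⟩)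
      [p ⟨1, by omega⟩, p ⟨2, by omega⟩, x (i + 2), x (i + 3), x (i + 4), x (i + 0)]
      (by first | simpa using h0 | simpa using h0')
      (by simp only [List.Chain, List.cons_append, List.nil_append, List.chain_cons]
          repeat' apply And.intro
          all_goals first
            | exact List.Chain.nil
            | exact hppath _ _ (by norm_num)
            | exact hxx _ _ (by decide)
            | exact (hxx _ _ (by decide)).symm
            | exact hlast.symm
            | exact h0
            | exact h0')
      (by simp only [List.nodup_cons, List.mem_cons, List.mem_singleton, List.not_mem_nil,
            List.nodup_nil, not_or, and_true, not_false_iff]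
          repeat' apply And.intro
          all_goals first
            | (intro h; have h2 := add_left_cancel (hinj h); revert h2; decide)
            | (intro h; exact hpout _ ⟨_, h.symm⟩)
            | (intro h; exact hpout _ ⟨_, h⟩)
            | (intro h; have h2 := hpinj h; revert h2; decide))
      (by simp)).imp (fun w hw => ⟨hw.1, by simpa using hw.2⟩)⟩
  · exact hC8 ⟨_, (hasCycleLength_of_list (x (i + 0)) (p ⟨0, by omega⟩)
      [p ⟨1, by omega⟩, p ⟨2, by omega⟩, p ⟨3, by omega⟩, x (i + 2), x (i + 3), x (i + 4)]
      (by first | simpa using h0 | simpa using h0')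
      (by simp only [List.Chain, List.cons_append, List.nil_append, List.chain_cons]
          repeat' apply And.intro
          all_goals first
            | exact List.Chain.nil
            | exact hppath _ _ (by norm_num)
            | exact hxx _ _ (by decide)
            | exact (hxx _ _ (by decide)).symm
            | exact hlast.symm
            | exact h0
            | exact h0')
      (by simp only [List.nodup_cons, List.mem_cons, List.mem_singleton, List.not_mem_nil,
            List.nodup_nil, not_or, and_true, not_false_iff]
          repeat' apply And.intro
          all_goals first
            | (intro h; have h2 := add_left_cancel (hinj h); revert h2; decide)
            | (intro h; exact hpout _ ⟨_, h.symm⟩)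
            | (intro h; exact hpout _ ⟨_, h⟩)
            | (intro h; have h2 := hpinj h; revert h2; decide))
      (by simp)).imp (fun w hw => ⟨hw.1, by simpa using hw.2⟩)⟩
  · exact hC8 ⟨_, (hasCycleLength_of_list (x (i + 0)) (p ⟨0, by omega⟩)
      [p ⟨1, by omega⟩, p ⟨2, by omega⟩, p ⟨3, by omega⟩, p ⟨4, by omega⟩, x (i + 2), x (i + 1)]
      (by first | simpa using h0 | simpa using h0')
      (by simp only [List.Chain, List.cons_append, List.nil_append, List.chain_cons]
          repeat' apply And.intro
          all_goals first
            | exact List.Chain.nil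
            | exact hppath _ _ (by norm_num)
            | exact hxx _ _ (by decide)
            | exact (hxx _ _ (by decide)).symm
            | exact hlast.symm
            | exact h0
            | exact h0')
      (by simp only [List.nodup_cons, List.mem_cons, List.mem_singleton, List.not_mem_nil,
            List.nodup_nil, not_or, and_true, not_false_iff]
          repeat' apply And.intro
          all_goals first
            | (intro h; have h2 := add_left_cancel (hinj h); revert h2; decide)
            | (intro h; exact hpout _ ⟨_, h.symm⟩)
            | (intro h; exact hpout _ ⟨_, h⟩)
            | (intro h; have h2 := hpinj h; revert h2; decide))
      (by simp)).imp (fun w hw => ⟨hw.1, by simpa using hw.2⟩)⟩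
  · exact hC8 ⟨_, (hasCycleLength_of_list (x (i + 1)) (p ⟨0, by omega⟩)
      [p ⟨1, by omega⟩, p ⟨2, by omega⟩, p ⟨3, by omega⟩, p ⟨4, by omega⟩, p ⟨5, by omega⟩, x (i + 2)]
      (by first | simpa using h0 | simpa using h0')
      (by simp only [List.Chain, List.cons_append, List.nil_append, List.chain_cons]
          repeat' apply And.intro
          all_goals first
            | exact List.Chain.nil
            | exact hppath _ _ (by norm_num)
            | exact hxx _ _ (by decide)
            | exact (hxx _ _ (by decide)).symm
            | exact hlast.symm
            | exact h0
            | exact h0')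
      (by simp only [List.nodup_cons, List.mem_cons, List.mem_singleton, List.not_mem_nil,
            List.nodup_nil, not_or, and_true, not_false_iff]
          repeat' apply And.intro
          all_goals first
            | (intro h; have h2 := add_left_cancel (hinj h); revert h2; decide)
            | (intro h; exact hpout _ ⟨_, h.symm⟩)
            | (intro h; exact hpout _ ⟨_, h⟩)
            | (intro h; have h2 := hpinj h; revert h2; decide))
      (by simp)).imp (fun w hw => ⟨hw.1, by simpa using hw.2⟩)⟩

lemma key2 (hC4 : ¬ HasCycleLength G 4) (hC8 : ¬ HasCycleLength G 8)
    (x : ZMod 5 → V) (hinj : Function.Injective x)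
    (hadj : ∀ i : ZMod 5, G.Adj (x i) (x (i + 1))) (i : ZMod 5)
    (L : ℕ) (hL : L ≤ 5) (p : Fin (L + 1) → V)
    (hpinj : Function.Injective p) (hpout : ∀ a, p a ∉ Set.range x)
    (hppath : ∀ a b : Fin (L + 1), a.val + 1 = b.val → G.Adj (p a) (p b))
    (h0 : G.Adj (x i) (p ⟨0, Nat.succ_pos L⟩))
    (h0' : G.Adj (x (i + 1)) (p ⟨0, Nat.succ_pos L⟩))
    (hlast : G.Adj (x (i + 2)) (p ⟨L, Nat.lt_succ_self L⟩) ∨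
      G.Adj (x (i + 4)) (p ⟨L, Nat.lt_succ_self L⟩)) : False := by
  rcases hlast with h | h
  · exact key hC4 hC8 x hinj hadj i L hL p hpinj hpout hppath h0 h0' h
  · -- reflect the cycle: x' j = x (i + 1 - j), new base index 0
    set x' : ZMod 5 → V := fun j => x (i + 1 - j) with hx'
    have hinj' : Function.Injective x' := by
      intro a b hab
      have h2 := hinj hab
      have : a = (i + 1) - ((i + 1) - a) := by ring
      rw [this, show i + 1 - a = i + 1 - b from h2]; ring
    have hadj' : ∀ j : ZMod 5, G.Adj (x' j) (x' (j + 1)) := by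
      intro j
      have h := hadj (i - j)
      rw [show i - j + 1 = i + 1 - j by ring] at h
      have h2 : x' (j + 1) = x (i - j) := by rw [hx']; ring_nf
      rw [hx']
      simpa [h2] using h.symm
    have hpout' : ∀ a, p a ∉ Set.range x' := by
      rintro a ⟨j, hj⟩
      exact hpout a ⟨i + 1 - j, hj⟩
    refine key hC4 hC8 x' hinj' hadj' 0 L hL p hpinj hpout' hppath ?_ ?_ ?_
    · show G.Adj (x (i + 1 - 0)) _
      simpa using h0'
    · show G.Adj (x (i + 1 - (0 + 1))) _
      simpa using h0
    · show G.Adj (x (i + 1 - (0 + 2))) _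
      have : i + 1 - (0 + 2) = i + 4 := by
        have h5 : (1 : ZMod 5) - (0 + 2) = 4 := by decide
        calc i + 1 - (0 + 2) = i + ((1 : ZMod 5) - (0 + 2)) := by ring
          _ = i + 4 := by rw [h5]
      rw [this]; exact h

end

theorem stmt_10 {V : Type*} (G : SimpleGraph V)
    (hC4 : ¬ HasCycleLength G 4) (hC8 : ¬ HasCycleLength G 8)
    (x : ZMod 5 → V) (hinj : Function.Injective x)
    (hadj : ∀ i : ZMod 5, G.Adj (x i) (x (i + 1)))
    (i : ZMod 5)
    -- paths P = u_1 … u_s and Q = v_1 … v_t in G - V(C)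
    (s t : ℕ) (hs : 0 < s) (ht : 0 < t)
    (P : Fin s → V) (Q : Fin t → V)
    (hPout : ∀ a, P a ∉ Set.range x) (hQout : ∀ a, Q a ∉ Set.range x)
    (hPinj : Function.Injective P) (hQinj : Function.Injective Q)
    (hPpath : ∀ a b : Fin s, a.val + 1 = b.val → G.Adj (P a) (P b))
    (hQpath : ∀ a b : Fin t, a.val + 1 = b.val → G.Adj (Q a) (Q b))
    -- u_1 ∈ A_i ∩ A_{i+1}  (in particular x_i ∈ I_C)
    (hu1 : G.Adj (x i) (P ⟨0, hs⟩)) (hu1' : G.Adj (x (i + 1)) (P ⟨0, hs⟩))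
    -- v_1 ∈ A_{i+2} ∪ A_{i+4}
    (hv1 : G.Adj (x (i + 2)) (Q ⟨0, ht⟩) ∨ G.Adj (x (i + 4)) (Q ⟨0, ht⟩)) :
    (s + t ≤ 7 → ∀ (a : Fin s) (b : Fin t), P a ≠ Q b) ∧
    (s + t ≤ 6 → ∀ (a : Fin s) (b : Fin t), ¬ G.Adj (P a) (Q b)) := by
  classical
  have hdisj : s + t ≤ 7 → ∀ (a : Fin s) (b : Fin t), P a ≠ Q b := by
    intro h7 a b hab
    have hex : ∃ n, ∃ hb : n < t, ∃ a' : Fin s, P a' = Q ⟨n, hb⟩ :=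
      ⟨b.val, b.isLt, a, by simpa using hab⟩
    obtain ⟨hb₀t, a₀, hPQ⟩ := Nat.find_spec hex
    set b₀ := Nat.find hex with hb₀def
    have hmin : ∀ k, k < b₀ → ∀ (hk : k < t) (a' : Fin s), P a' ≠ Q ⟨k, hk⟩ := by
      intro k hk hkt a' hPa
      exact Nat.find_min hex hk ⟨hkt, a', hPa⟩
    have has : a₀.val < s := a₀.isLt
    set L := a₀.val + b₀ with hLdef
    have hL5 : L ≤ 5 := by omega
    refine key2 hC4 hC8 x hinj hadj i L hL5
      (fun j => if h : j.val ≤ a₀.val then P ⟨j.val, by omega⟩ else Q ⟨L - j.val, by omega⟩)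
      ?_ ?_ ?_ ?_ ?_ ?_
    · -- injective
      intro j k hjk
      have hj' := j.isLt
      have hk' := k.isLt
      dsimp only at hjk
      by_cases h1 : j.val ≤ a₀.val <;> by_cases h2 : k.val ≤ a₀.val
      · rw [dif_pos h1, dif_pos h2] at hjk
        have := hPinj hjk
        exact Fin.ext (by simpa using congrArg Fin.val this)
      · rw [dif_pos h1, dif_neg h2] at hjk
        exact absurd hjk (hmin (L - k.val) (by omega) _ _)
      · rw [dif_neg h1, dif_pos h2] at hjk
        exact absurd hjk.symm (hmin (L - j.val) (by omega) _ _)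
      · rw [dif_neg h1, dif_neg h2] at hjk
        have h3 : L - j.val = L - k.val := by
          simpa using congrArg Fin.val (hQinj hjk)
        exact Fin.ext (by omega)
    · -- outside C
      intro a'
      split_ifs with h
      · exact hPout _
      · exact hQout _
    · -- path
      intro j k hjk
      have hj' := j.isLt
      have hk' := k.isLt
      by_cases h2 : k.val ≤ a₀.val
      · have h1 : j.val ≤ a₀.val := by omega
        rw [dif_pos h1, dif_pos h2]
        exact hPpath _ _ hjk
      · by_cases h1 : j.val ≤ a₀.val
        · have hja : j.val = a₀.val := by omega
          rw [dif_pos h1, dif_neg h2]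
          have heq : (⟨j.val, by omega⟩ : Fin s) = a₀ := Fin.ext (by simpa using hja)
          rw [heq, hPQ]
          refine (hQpath ⟨L - k.val, by omega⟩ ⟨b₀, hb₀t⟩ ?_).symm
          show L - k.val + 1 = b₀
          omega
        · rw [dif_neg h1, dif_neg h2]
          refine (hQpath ⟨L - k.val, by omega⟩ ⟨L - j.val, by omega⟩ ?_).symm
          show L - k.val + 1 = L - j.val
          omega
    · -- first vertex adjacency to x i
      dsimp only
      rw [dif_pos (Nat.zero_le _)]
      exact hu1
    · dsimp only
      rw [dif_pos (Nat.zero_le _)]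
      exact hu1'
    · -- last vertex
      dsimp only
      by_cases hb0 : b₀ = 0
      · rw [dif_pos (by omega)]
        have heq : (⟨L, by omega⟩ : Fin s) = a₀ := Fin.ext (by simp; omega)
        rw [heq, hPQ]
        have heq2 : (⟨b₀, hb₀t⟩ : Fin t) = ⟨0, ht⟩ := Fin.ext (by simpa using hb0)
        rw [heq2]
        exact hv1
      · rw [dif_neg (by omega)]
        have heq : (⟨L - L, by omega⟩ : Fin t) = ⟨0, ht⟩ := Fin.ext (by simp)
        rw [heq]
        exact hv1
  refine ⟨hdisj, ?_⟩
  intro h6 a b hedge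
  have hne := hdisj (by omega)
  have hat := a.isLt
  have hbt := b.isLt
  set L := a.val + b.val + 1 with hLdef
  have hL5 : L ≤ 5 := by omega
  refine key2 hC4 hC8 x hinj hadj i L hL5
    (fun j => if h : j.val ≤ a.val then P ⟨j.val, by omega⟩ else Q ⟨L - j.val, by omega⟩)
    ?_ ?_ ?_ ?_ ?_ ?_
  · intro j k hjk
    have hj' := j.isLt
    have hk' := k.isLt
    dsimp only at hjk
    by_cases h1 : j.val ≤ a.val <;> by_cases h2 : k.val ≤ a.val
    · rw [dif_pos h1, dif_pos h2] at hjk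
      exact Fin.ext (by simpa using congrArg Fin.val (hPinj hjk))
    · rw [dif_pos h1, dif_neg h2] at hjk
      exact absurd hjk (hne _ _)
    · rw [dif_neg h1, dif_pos h2] at hjk
      exact absurd hjk.symm (hne _ _)
    · rw [dif_neg h1, dif_neg h2] at hjk
      have h3 : L - j.val = L - k.val := by
        simpa using congrArg Fin.val (hQinj hjk)
      exact Fin.ext (by omega)
  · intro a'
    split_ifs with h
    · exact hPout _
    · exact hQout _
  · intro j k hjk
    have hj' := j.isLt
    have hk' := k.isLt
    by_cases h2 : k.val ≤ a.val
    · have h1 : j.val ≤ a.val := by omega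
      rw [dif_pos h1, dif_pos h2]
      exact hPpath _ _ hjk
    · by_cases h1 : j.val ≤ a.val
      · have hja : j.val = a.val := by omega
        rw [dif_pos h1, dif_neg h2]
        have heq : (⟨j.val, by omega⟩ : Fin s) = a := Fin.ext (by simpa using hja)
        have heq2 : (⟨L - k.val, by omega⟩ : Fin t) = b := Fin.ext (by simp; omega)
        rw [heq, heq2]
        exact hedge
      · rw [dif_neg h1, dif_neg h2]
        refine (hQpath ⟨L - k.val, by omega⟩ ⟨L - j.val, by omega⟩ ?_).symm
        show L - k.val + 1 = L - j.val
        omega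
  · dsimp only
    rw [dif_pos (Nat.zero_le _)]
    exact hu1
  · dsimp only
    rw [dif_pos (Nat.zero_le _)]
    exact hu1'
  · dsimp only
    rw [dif_neg (by omega)]
    have heq : (⟨L - L, by omega⟩ : Fin t) = ⟨0, ht⟩ := Fin.ext (by simp)
    rw [heq]
    exact hv1
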